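/- (Small cycle estimate) Let G be a finite simple graph which is connected and remains connected after deleting any set of at most two edges, with first Betti number b ≥ 2, and suppose G contains a cycle of length g. Let h be an integer with 1 ≤ h ≤ min(g, b−1), and suppose S > 0 is a real number such that every finite simple graph with first Betti number at least b−h, equipped with any probability edge weighting, contains a cycle of weight at most S. Then for every probability edge weighting λ of G there exists a cycle C in G with λ(C) ≤ (g·S)/(h·S + g), i.e. λ(C)⁻¹ ≥ h/g + 1/S. -/

import Mathlib

attribute [local instance] Classical.propDecidable

/-- In any finset `s` with real weights, there is a subset of cardinality `h ≤ |s|`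
carrying at least an `h/|s|` fraction of the total weight (the `h` heaviest elements). -/
lemma exists_heavy_subset {α : Type*} [DecidableEq α] (f : α → ℝ) :
    ∀ (s : Finset α) (h : ℕ), h ≤ s.card →
      ∃ D, D ⊆ s ∧ D.card = h ∧
        (h : ℝ) * (∑ x ∈ s, f x) ≤ (s.card : ℝ) * ∑ x ∈ D, f x := by
  intro s
  induction s using Finset.strongInduction with
  | _ s ih =>
    intro h hle
    rcases eq_or_lt_of_le hle with heq | hlt
    · exact ⟨s, Finset.Subset.refl s, heq.symm, by rw [heq]⟩
    · have hne : s.Nonempty := Finset.card_pos.mp (lt_of_le_of_lt (Nat.zero_le h) hlt)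
      obtain ⟨m, hm, hmin⟩ := s.exists_min_image f hne
      have hsub : s.erase m ⊂ s := Finset.erase_ssubset hm
      have hcard : (s.erase m).card = s.card - 1 := Finset.card_erase_of_mem hm
      have hle' : h ≤ (s.erase m).card := by omega
      obtain ⟨D, hDsub, hDcard, hDsum⟩ := ih _ hsub h hle'
      refine ⟨D, hDsub.trans (Finset.erase_subset _ _), hDcard, ?_⟩
      have hcardpos : 1 ≤ s.card := Finset.card_pos.mpr hne
      have hcastcard : ((s.erase m).card : ℝ) = (s.card : ℝ) - 1 := by
        rw [hcard, Nat.cast_sub hcardpos, Nat.cast_one]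
      rw [hcastcard] at hDsum
      have hsplit : f m + ∑ x ∈ s.erase m, f x = ∑ x ∈ s, f x :=
        Finset.add_sum_erase s f hm
      have hfm : (h : ℝ) * f m ≤ ∑ x ∈ D, f x := by
        have h1 : ∀ x ∈ D, f m ≤ f x := fun x hx =>
          hmin x (Finset.erase_subset _ _ (hDsub hx))
        have h2 := Finset.card_nsmul_le_sum D f (f m) h1
        rw [hDcard, nsmul_eq_mul] at h2
        exact h2
      nlinarith [hDsum, hfm, hsplit]

/-- The small cycle estimate (Section 3.1 of the paper): if `G` is 3-edge-connected with
first Betti number `b ≥ 2` (encoded by `|E| + c = |V| + b`) and contains a cycle of length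
`g`, if `1 ≤ h ≤ min(g, b−1)`, and if every graph of first Betti number at least `b − h`
with a probability edge weighting has a cycle of weight at most `S > 0`, then every
probability edge weighting of `G` admits a cycle of weight at most `gS/(hS + g)`,
i.e. `λ(C)⁻¹ ≥ h/g + 1/S`. -/
theorem small_cycle_estimate {V : Type} [Fintype V] (G : SimpleGraph V)
    (hconn : ∀ s : Set (Sym2 V), s.ncard ≤ 2 → (G.deleteEdges s).Connected)
    (b : ℕ) (hb : 2 ≤ b)
    (hbetti : G.edgeFinset.card + Nat.card G.ConnectedComponent = Fintype.card V + b)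
    (g : ℕ) (x₀ : V) (w₀ : G.Walk x₀ x₀) (hw₀ : w₀.IsCycle) (hg : w₀.length = g)
    (h : ℕ) (hh1 : 1 ≤ h) (hhg : h ≤ g) (hhb : h ≤ b - 1)
    (S : ℝ) (hSpos : 0 < S)
    (hsys : ∀ (V' : Type) [Fintype V'] (G' : SimpleGraph V') (b' : ℕ),
      G'.edgeFinset.card + Nat.card G'.ConnectedComponent = Fintype.card V' + b' →
      b - h ≤ b' →
      ∀ lam' : Sym2 V' → ℝ, (∀ e ∈ G'.edgeFinset, 0 ≤ lam' e) →
        (∑ e ∈ G'.edgeFinset, lam' e = 1) →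
        ∃ (x : V') (w : G'.Walk x x), w.IsCycle ∧ ∑ e ∈ w.edges.toFinset, lam' e ≤ S)
    (lam : Sym2 V → ℝ) (hnn : ∀ e ∈ G.edgeFinset, 0 ≤ lam e)
    (hsum : ∑ e ∈ G.edgeFinset, lam e = 1) :
    ∃ (x : V) (w : G.Walk x x), w.IsCycle ∧
      ∑ e ∈ w.edges.toFinset, lam e ≤ ((g : ℝ) * S) / ((h : ℝ) * S + (g : ℝ)) := by
  classical
  have hg1 : 1 ≤ g := le_trans hh1 hhg
  have hgpos : (0 : ℝ) < g := by exact_mod_cast hg1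
  have hhpos : (0 : ℝ) < h := by exact_mod_cast hh1
  have hden : (0 : ℝ) < (h : ℝ) * S + g := by positivity
  -- the edges of the given cycle
  have hnodup : w₀.edges.Nodup := hw₀.edges_nodup
  have hcardE : w₀.edges.toFinset.card = g := by
    rw [List.toFinset_card_of_nodup hnodup, SimpleGraph.Walk.length_edges, hg]
  have hsubE : w₀.edges.toFinset ⊆ G.edgeFinset := by
    intro e he
    rw [List.mem_toFinset] at he
    exact SimpleGraph.mem_edgeFinset.mpr (w₀.edges_subset_edgeSet he)
  set W := ∑ e ∈ w₀.edges.toFinset, lam e with hW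
  by_cases hWB : W ≤ ((g : ℝ) * S) / ((h : ℝ) * S + (g : ℝ))
  · exact ⟨x₀, w₀, hw₀, hWB⟩
  push_neg at hWB
  -- choose the `h` heaviest edges of the cycle
  obtain ⟨D, hDsub, hDcard, hDsum⟩ :=
    exists_heavy_subset lam w₀.edges.toFinset h (by rw [hcardE]; exact hhg)
  rw [hcardE] at hDsum
  set t := ∑ e ∈ D, lam e with ht
  have hDsubE : D ⊆ G.edgeFinset := hDsub.trans hsubE
  have ht1 : t ≤ 1 := by
    rw [← hsum]
    exact Finset.sum_le_sum_of_subset_of_nonneg hDsubE fun e he _ => hnn e he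
  -- key: t (hS + g) > hS
  have hkey : (h : ℝ) * S < t * ((h : ℝ) * S + g) := by
    have h2 : (g : ℝ) * S < W * ((h : ℝ) * S + g) := (div_lt_iff₀ hden).mp hWB
    nlinarith [hDsum, h2, hSpos, hgpos, hhpos]
  -- the graph with the heavy edges deleted
  set G' := G.deleteEdges ↑D with hG'
  have hE' : G'.edgeFinset = G.edgeFinset \ D := by
    ext e
    simp [hG', SimpleGraph.edgeSet_deleteEdges, SimpleGraph.mem_edgeFinset]
  have hE'card : G'.edgeFinset.card = G.edgeFinset.card - h := by
    rw [hE', Finset.card_sdiff_of_subset hDsubE, hDcard]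
  have hE'sum : ∑ e ∈ G'.edgeFinset, lam e = 1 - t := by
    rw [hE', Finset.sum_sdiff_eq_sub hDsubE, hsum, ht]
  have hDle : h ≤ G.edgeFinset.card := by
    rw [← hDcard]; exact Finset.card_le_card hDsubE
  -- connected component counts
  haveI : Nonempty V := ⟨x₀⟩
  have hc1 : Nat.card G.ConnectedComponent = 1 := by
    have hGconn : G.Connected := by
      have := hconn ∅ (by simp)
      rwa [SimpleGraph.deleteEdges_empty] at this
    rw [Nat.card_eq_one_iff_unique]
    refine ⟨⟨fun a b => ?_⟩, ⟨G.connectedComponentMk x₀⟩⟩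
    induction a using SimpleGraph.ConnectedComponent.ind with
    | _ u =>
      induction b using SimpleGraph.ConnectedComponent.ind with
      | _ v => exact SimpleGraph.ConnectedComponent.sound (hGconn.preconnected u v)
  haveI : Finite G'.ConnectedComponent :=
    Finite.of_surjective (G'.connectedComponentMk) (Quot.mk_surjective)
  haveI : Nonempty G'.ConnectedComponent := ⟨G'.connectedComponentMk x₀⟩
  have hc'pos : 1 ≤ Nat.card G'.ConnectedComponent := Nat.card_pos
  have hbV : 1 ≤ Fintype.card V := Fintype.card_pos
  -- Betti number of G'
  set b' := b - (h + 1) + Nat.card G'.ConnectedComponent with hb'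
  have hbetti' : G'.edgeFinset.card + Nat.card G'.ConnectedComponent = Fintype.card V + b' := by
    omega
  have hb'ge : b - h ≤ b' := by omega
  -- the nonnegativity bound we will need
  have hBnn : (0 : ℝ) ≤ ((g : ℝ) * S) / ((h : ℝ) * S + (g : ℝ)) := by positivity
  -- get a cheap cycle in G', then transfer to G
  suffices hsuff : ∃ (x : V) (w : G'.Walk x x), w.IsCycle ∧
      ∑ e ∈ w.edges.toFinset, lam e ≤ ((g : ℝ) * S) / ((h : ℝ) * S + (g : ℝ)) by
    obtain ⟨x, w, hwc, hwle⟩ := hsuff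
    have hedges : ∀ e ∈ w.edges, e ∈ G.edgeSet := fun e he =>
      SimpleGraph.edgeSet_mono (SimpleGraph.deleteEdges_le (↑D : Set (Sym2 V)))
        (w.edges_subset_edgeSet he)
    refine ⟨x, w.transfer G hedges, hwc.transfer hedges, ?_⟩
    rwa [SimpleGraph.Walk.edges_transfer]
  by_cases hlt : t < 1
  · -- renormalize and apply the systole hypothesis
    have h1t : (0 : ℝ) < 1 - t := by linarith
    set lam' : Sym2 V → ℝ := fun e => lam e / (1 - t) with hlam'
    have hnn' : ∀ e ∈ G'.edgeFinset, 0 ≤ lam' e := by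
      intro e he
      have : e ∈ G.edgeFinset := by rw [hE'] at he; exact (Finset.mem_sdiff.mp he).1
      exact div_nonneg (hnn e this) h1t.le
    have hsum' : ∑ e ∈ G'.edgeFinset, lam' e = 1 := by
      rw [hlam', ← Finset.sum_div, hE'sum, div_self h1t.ne']
    obtain ⟨x, w, hwc, hwS⟩ := hsys V G' b' (by convert hbetti') hb'ge lam' (by convert hnn') (by convert hsum')
    refine ⟨x, w, hwc, ?_⟩
    rw [hlam', ← Finset.sum_div] at hwS
    have hle1 : ∑ e ∈ w.edges.toFinset, lam e ≤ S * (1 - t) := by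
      rw [div_le_iff₀ h1t] at hwS
      linarith
    have hle2 : S * (1 - t) ≤ ((g : ℝ) * S) / ((h : ℝ) * S + (g : ℝ)) := by
      rw [le_div_iff₀ hden]
      nlinarith [mul_lt_mul_of_pos_left hkey hSpos]
    linarith
  · -- all remaining edges have weight 0
    have hteq : t = 1 := le_antisymm ht1 (not_lt.mp hlt)
    have hzero : ∀ e ∈ G'.edgeFinset, lam e = 0 := by
      have hnn'' : ∀ e ∈ G'.edgeFinset, 0 ≤ lam e := by
        intro e he
        have : e ∈ G.edgeFinset := by rw [hE'] at he; exact (Finset.mem_sdiff.mp he).1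
        exact hnn e this
      have : ∑ e ∈ G'.edgeFinset, lam e = 0 := by rw [hE'sum, hteq]; ring
      exact (Finset.sum_eq_zero_iff_of_nonneg hnn'').mp this
    -- a uniform probability weighting on G'
    have hE'pos : 0 < G'.edgeFinset.card := by omega
    set lam' : Sym2 V → ℝ := fun _ => (G'.edgeFinset.card : ℝ)⁻¹ with hlam'
    have hnn' : ∀ e ∈ G'.edgeFinset, 0 ≤ lam' e := by
      intro e _
      positivity
    have hsum' : ∑ e ∈ G'.edgeFinset, lam' e = 1 := by
      rw [hlam', Finset.sum_const, nsmul_eq_mul,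
        mul_inv_cancel₀ (by exact_mod_cast hE'pos.ne' : (G'.edgeFinset.card : ℝ) ≠ 0)]
    obtain ⟨x, w, hwc, _⟩ := hsys V G' b' (by convert hbetti') hb'ge lam' (by convert hnn') (by convert hsum')
    refine ⟨x, w, hwc, ?_⟩
    have : ∑ e ∈ w.edges.toFinset, lam e = 0 := by
      apply Finset.sum_eq_zero
      intro e he
      rw [List.mem_toFinset] at he
      exact hzero e (SimpleGraph.mem_edgeFinset.mpr (w.edges_subset_edgeSet he))
    rw [this]
    exact hBnn
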